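/- Continuity of interpretation (Lemma A.1): if l_0 ≤ l_1 ≤ … is an increasing sequence of local name assignments and l_ω is its pointwise supremum (l_ω(k,n) = ⋃_{m∈ℕ} l_m(k,n)), then for every principal expression p, every world w, and every key k, ⟦p⟧_{w,l_ω,k} = ⋃_{m∈ℕ} ⟦p⟧_{w,l_m,k}. -/
import Mathlib


/-- Principal expressions over keys `K`, global names `G`, local names `N`. -/
inductive PExp (K G N : Type*) where
  | key : K → PExp K G N
  | glob : G → PExp K G N
  | loc : N → PExp K G N
  | s : PExp K G N → PExp K G N → PExp K G N

/-- Formulas of LLNC. -/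
inductive Fml (K G N : Type*) where
  | bdto : PExp K G N → PExp K G N → Fml K G N
  | cert : K → Fml K G N → Fml K G N
  | not : Fml K G N → Fml K G N
  | and : Fml K G N → Fml K G N → Fml K G N

/-- A world: an interpretation of global names and an assignment of
certificates to keys, with only finitely many certificates issued. -/
structure World (K G N : Type*) where
  beta : G → Set K
  certs : K → Set (Fml K G N)
  finite_certs : (⋃ k, certs k).Finite

variable {K G N : Type*}

/-- The interpretation of a principal expression relative to a world, a
local name assignment, and a key. -/
def interp (w : World K G N) (l : K → N → Set K) : PExp K G N → K → Set K
  | .key k', _ => {k'}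
  | .glob g, _ => w.beta g
  | .loc n, k => l k n
  | .s p q, k => ⋃ k' ∈ interp w l p k, interp w l q k'

/-- Satisfaction of a formula at a world, local name assignment, and key. -/
def Sat (w : World K G N) (l : K → N → Set K) (k : K) : Fml K G N → Prop
  | .bdto p q => interp w l q k ⊆ interp w l p k
  | .cert k' φ => φ ∈ w.certs k'
  | .not φ => ¬ Sat w l k φ
  | .and φ ψ => Sat w l k φ ∧ Sat w l k ψ

/-- A local name assignment is consistent with a world if every issued
binding certificate holds at the issuer. -/
def Consistent (w : World K G N) (l : K → N → Set K) : Prop :=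
  ∀ (k : K) (n : N) (p : PExp K G N),
    Fml.bdto (.loc n) p ∈ w.certs k → Sat w l k (.bdto (.loc n) p)


theorem interp_mono (w : World K G N) {l l' : K → N → Set K}
    (h : ∀ k n, l k n ⊆ l' k n) (p : PExp K G N) (k : K) :
    interp w l p k ⊆ interp w l' p k := by
  induction p generalizing k with
  | key k' => exact subset_rfl
  | glob g => exact subset_rfl
  | loc n => exact h k n
  | s p q ihp ihq =>
    intro x hx
    simp only [interp, Set.mem_iUnion] at hx ⊢
    obtain ⟨k', hk', hx⟩ := hx
    exact ⟨k', ihp k hk', ihq k' hx⟩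

/-- Lemma A.1: Continuity of interpretation: the interpretation of
a principal expression under the pointwise supremum of an increasing sequence of
local name assignments is the union of the interpretations under the members of
the sequence. -/
theorem interp_continuous [Nonempty K] (lseq : ℕ → K → N → Set K)
    (hmono : ∀ (m : ℕ) (k : K) (n : N), lseq m k n ⊆ lseq (m + 1) k n)
    (lω : K → N → Set K) (hlω : ∀ (k : K) (n : N), lω k n = ⋃ m : ℕ, lseq m k n)
    (p : PExp K G N) (w : World K G N) (k : K) :
    interp w lω p k = ⋃ m : ℕ, interp w (lseq m) p k := by
  have hle : ∀ m m' : ℕ, m ≤ m' → ∀ k n, lseq m k n ⊆ lseq m' k n :=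
    fun m m' h k n =>
      monotone_nat_of_le_succ (f := fun m => lseq m k n) (fun m => hmono m k n) h
  have hsub : ∀ m k n, lseq m k n ⊆ lω k n := by
    intro m k n
    rw [hlω]
    exact Set.subset_iUnion (fun m => lseq m k n) m
  induction p generalizing k with
  | key k' => simp [interp]
  | glob g => simp only [interp]; exact (Set.iUnion_const _).symm
  | loc n => exact hlω k n
  | s p q ihp ihq =>
    apply Set.Subset.antisymm
    · intro x hx
      simp only [interp, Set.mem_iUnion] at hx ⊢
      obtain ⟨k', hk', hx⟩ := hx
      rw [ihp k] at hk'
      rw [ihq k'] at hx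
      simp only [Set.mem_iUnion] at hk' hx
      obtain ⟨m1, hm1⟩ := hk'
      obtain ⟨m2, hm2⟩ := hx
      refine ⟨max m1 m2, k', ?_, ?_⟩
      · exact interp_mono w (hle m1 _ (le_max_left m1 m2)) p k hm1
      · exact interp_mono w (hle m2 _ (le_max_right m1 m2)) q k' hm2
    · exact Set.iUnion_subset fun m => interp_mono w (hsub m) _ k
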